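/- Assume: consistency for a=0 and a=2; conditional mean exchangeability over A in the trial for a=0 with trial positivity for a=0; conditional exchangeability over A in the external data for a=0 and a=2 with external treatment positivity for a=0 and a=2; external-source positivity P(S=0|X=x)>0 for x with P(X=x,S=1)>0; transportability of conditional relative effect measures: E[Y²|X=x,S=1]/E[Y⁰|X=x,S=1] = E[Y²|X=x,S=0]/E[Y⁰|X=x,S=0] whenever both P(X=x,S=1)>0 and P(X=x,S=0)>0, with all four conditional means nonzero. Then E[Y² | S=1] = ρ := Σ_x E[Y|X=x,S=1,A=0] · (E[Y|X=x,S=0,A=2] / E[Y|X=x,S=0,A=0]) · P(X=x | S=1), summing over x with P(X=x,S=1)>0. -/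
import Mathlib


open Finset
open scoped Classical

noncomputable def pr {Ω : Type*} [Fintype Ω] (P : Ω → ℝ) (E : Ω → Prop) : ℝ :=
  ∑ ω, if E ω then P ω else 0

noncomputable def cexp {Ω : Type*} [Fintype Ω] (P : Ω → ℝ) (Y : Ω → ℝ) (E : Ω → Prop) : ℝ :=
  (∑ ω, if E ω then Y ω * P ω else 0) / pr P E

noncomputable def cpr {Ω : Type*} [Fintype Ω] (P : Ω → ℝ) (E F : Ω → Prop) : ℝ :=
  pr P (fun ω => E ω ∧ F ω) / pr P F


lemma pr_nonneg' {Ω : Type*} [Fintype Ω] {P : Ω → ℝ} (hP : ∀ ω, 0 ≤ P ω) (E : Ω → Prop) :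
    0 ≤ pr P E := by
  apply Finset.sum_nonneg; intro ω _; split <;> simp [hP ω]

lemma pr_zero_of' {Ω : Type*} [Fintype Ω] {P : Ω → ℝ} (hP : ∀ ω, 0 ≤ P ω) {E : Ω → Prop}
    (h : pr P E = 0) : ∀ ω, E ω → P ω = 0 := by
  intro ω hω
  have := (Finset.sum_eq_zero_iff_of_nonneg (fun ω _ => by split <;> simp [hP ω])).mp h ω (Finset.mem_univ ω)
  simpa [hω] using this

lemma cexp_congr' {Ω : Type*} [Fintype Ω] (P : Ω → ℝ) {f g : Ω → ℝ} {E : Ω → Prop}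
    (h : ∀ ω, E ω → f ω = g ω) : cexp P f E = cexp P g E := by
  unfold cexp; congr 1
  apply Finset.sum_congr rfl; intro ω _
  split_ifs with hω
  · rw [h ω hω]
  · rfl


theorem stmt9    {Ω 𝓧 : Type*} [Fintype Ω] [Fintype 𝓧]
    (P : Ω → ℝ) (hP : ∀ ω, 0 ≤ P ω) (hPsum : ∑ ω, P ω = 1)
    (X : Ω → 𝓧) (S : Ω → ℕ) (A : Ω → ℕ) (Y : Ω → ℝ)
    (Y0 Y2 : Ω → ℝ)
    (hS1 : 0 < pr P (fun ω => S ω = 1))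
    (hcons0 : ∀ ω, A ω = 0 → Y0 ω = Y ω)
    (hcons2 : ∀ ω, A ω = 2 → Y2 ω = Y ω)
    (hexch0 : ∀ x, 0 < pr P (fun ω => X ω = x ∧ S ω = 1) → cexp P Y0 (fun ω => X ω = x ∧ S ω = 1) = cexp P Y0 (fun ω => X ω = x ∧ S ω = 1 ∧ A ω = 0))
    (hpos0 : ∀ x, 0 < pr P (fun ω => X ω = x ∧ S ω = 1) → 0 < cpr P (fun ω => A ω = 0) (fun ω => X ω = x ∧ S ω = 1))
    (hexchext0 : ∀ x, 0 < pr P (fun ω => X ω = x ∧ S ω = 0) → cexp P Y0 (fun ω => X ω = x ∧ S ω = 0) = cexp P Y0 (fun ω => X ω = x ∧ S ω = 0 ∧ A ω = 0))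
    (hexchext2 : ∀ x, 0 < pr P (fun ω => X ω = x ∧ S ω = 0) → cexp P Y2 (fun ω => X ω = x ∧ S ω = 0) = cexp P Y2 (fun ω => X ω = x ∧ S ω = 0 ∧ A ω = 2))
    (hposext0 : ∀ x, 0 < pr P (fun ω => X ω = x ∧ S ω = 0) → 0 < cpr P (fun ω => A ω = 0) (fun ω => X ω = x ∧ S ω = 0))
    (hposext2 : ∀ x, 0 < pr P (fun ω => X ω = x ∧ S ω = 0) → 0 < cpr P (fun ω => A ω = 2) (fun ω => X ω = x ∧ S ω = 0))
    (hextpos : ∀ x, 0 < pr P (fun ω => X ω = x ∧ S ω = 1) → 0 < cpr P (fun ω => S ω = 0) (fun ω => X ω = x))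
    (htransratio : ∀ x, 0 < pr P (fun ω => X ω = x ∧ S ω = 1) → 0 < pr P (fun ω => X ω = x ∧ S ω = 0) →
      cexp P Y2 (fun ω => X ω = x ∧ S ω = 1) / cexp P Y0 (fun ω => X ω = x ∧ S ω = 1) =
      cexp P Y2 (fun ω => X ω = x ∧ S ω = 0) / cexp P Y0 (fun ω => X ω = x ∧ S ω = 0))
    (hne : ∀ x, 0 < pr P (fun ω => X ω = x ∧ S ω = 1) → 0 < pr P (fun ω => X ω = x ∧ S ω = 0) →
      cexp P Y2 (fun ω => X ω = x ∧ S ω = 1) ≠ 0 ∧ cexp P Y0 (fun ω => X ω = x ∧ S ω = 1) ≠ 0 ∧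
      cexp P Y2 (fun ω => X ω = x ∧ S ω = 0) ≠ 0 ∧ cexp P Y0 (fun ω => X ω = x ∧ S ω = 0) ≠ 0)
    : cexp P Y2 (fun ω => S ω = 1) =
      ∑ x ∈ univ.filter (fun x => 0 < pr P (fun ω => X ω = x ∧ S ω = 1)),
        cexp P Y (fun ω => X ω = x ∧ S ω = 1 ∧ A ω = 0) * (cexp P Y (fun ω => X ω = x ∧ S ω = 0 ∧ A ω = 2) / cexp P Y (fun ω => X ω = x ∧ S ω = 0 ∧ A ω = 0)) * (pr P (fun ω => X ω = x ∧ S ω = 1) / pr P (fun ω => S ω = 1)) := by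
  -- abbreviations
  have hS0pos : ∀ x, 0 < pr P (fun ω => X ω = x ∧ S ω = 1) →
      0 < pr P (fun ω => X ω = x ∧ S ω = 0) := by
    intro x hx
    have h := hextpos x hx
    unfold cpr at h
    have hnum : pr P (fun ω => S ω = 0 ∧ X ω = x) ≠ 0 := by
      intro h0; rw [h0] at h; simp at h
    have heq : pr P (fun ω => X ω = x ∧ S ω = 0) = pr P (fun ω => S ω = 0 ∧ X ω = x) := by
      unfold pr; apply Finset.sum_congr rfl; intro ω _; simp [and_comm]
    rw [heq]
    exact lt_of_le_of_ne (pr_nonneg' hP _) (Ne.symm hnum)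
  -- key per-x identity
  have hkey : ∀ x, 0 < pr P (fun ω => X ω = x ∧ S ω = 1) →
      cexp P Y2 (fun ω => X ω = x ∧ S ω = 1) =
      cexp P Y (fun ω => X ω = x ∧ S ω = 1 ∧ A ω = 0) *
        (cexp P Y (fun ω => X ω = x ∧ S ω = 0 ∧ A ω = 2) /
         cexp P Y (fun ω => X ω = x ∧ S ω = 0 ∧ A ω = 0)) := by
    intro x hx
    have hx0 := hS0pos x hx
    obtain ⟨hne1, hne2, hne3, hne4⟩ := hne x hx hx0
    have htr := htransratio x hx hx0
    have e1 : cexp P Y0 (fun ω => X ω = x ∧ S ω = 1) =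
        cexp P Y (fun ω => X ω = x ∧ S ω = 1 ∧ A ω = 0) := by
      rw [hexch0 x hx]
      exact cexp_congr' P (fun ω hω => hcons0 ω hω.2.2)
    have e2 : cexp P Y2 (fun ω => X ω = x ∧ S ω = 0) =
        cexp P Y (fun ω => X ω = x ∧ S ω = 0 ∧ A ω = 2) := by
      rw [hexchext2 x hx0]
      exact cexp_congr' P (fun ω hω => hcons2 ω hω.2.2)
    have e3 : cexp P Y0 (fun ω => X ω = x ∧ S ω = 0) =
        cexp P Y (fun ω => X ω = x ∧ S ω = 0 ∧ A ω = 0) := by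
      rw [hexchext0 x hx0]
      exact cexp_congr' P (fun ω hω => hcons0 ω hω.2.2)
    rw [← e1, ← e2, ← e3]
    field_simp at htr ⊢
    linarith [htr]
  -- decomposition of LHS
  have hdec : cexp P Y2 (fun ω => S ω = 1) =
      ∑ x ∈ Finset.univ.filter (fun x => 0 < pr P (fun ω => X ω = x ∧ S ω = 1)),
        cexp P Y2 (fun ω => X ω = x ∧ S ω = 1) *
          (pr P (fun ω => X ω = x ∧ S ω = 1) / pr P (fun ω => S ω = 1)) := by
    have hnum : (∑ ω, @ite ℝ (S ω = 1) (Classical.propDecidable _) (Y2 ω * P ω) 0) =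
        ∑ x, ∑ ω, @ite ℝ (X ω = x ∧ S ω = 1) (Classical.propDecidable _) (Y2 ω * P ω) 0 := by
      rw [Finset.sum_comm]
      apply Finset.sum_congr rfl; intro ω _
      by_cases hs : S ω = 1
      · simp [hs, Finset.sum_ite_eq', eq_comm]
      · simp [hs]
    unfold cexp
    beta_reduce
    rw [hnum, Finset.sum_div]
    rw [← Finset.sum_filter_add_sum_filter_not Finset.univ
        (fun x => 0 < pr P (fun ω => X ω = x ∧ S ω = 1))]
    have hzero : ∀ x ∈ Finset.univ.filter
        (fun x => ¬ 0 < pr P (fun ω => X ω = x ∧ S ω = 1)),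
        (∑ ω, @ite ℝ (X ω = x ∧ S ω = 1) (Classical.propDecidable _) (Y2 ω * P ω) 0) / pr P (fun ω => S ω = 1) = 0 := by
      intro x hxmem
      simp only [Finset.mem_filter] at hxmem
      have hpz : pr P (fun ω => X ω = x ∧ S ω = 1) = 0 :=
        le_antisymm (not_lt.mp hxmem.2) (pr_nonneg' hP _)
      have : (∑ ω, @ite ℝ (X ω = x ∧ S ω = 1) (Classical.propDecidable _) (Y2 ω * P ω) 0) = 0 := by
        apply Finset.sum_eq_zero; intro ω _
        split_ifs with hω
        · rw [pr_zero_of' hP hpz ω hω, mul_zero]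
        · rfl
      rw [this, zero_div]
    rw [Finset.sum_eq_zero hzero, add_zero]
    apply Finset.sum_congr rfl
    intro x hxmem
    simp only [Finset.mem_filter] at hxmem
    have hpne : pr P (fun ω => X ω = x ∧ S ω = 1) ≠ 0 := ne_of_gt hxmem.2
    rw [div_mul_div_comm, mul_comm (pr P fun ω => X ω = x ∧ S ω = 1),
      mul_div_mul_right _ _ hpne]
  rw [hdec]
  apply Finset.sum_congr rfl
  intro x hxmem
  simp only [Finset.mem_filter] at hxmem
  rw [hkey x hxmem.2]
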